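/- If the vacancy function 𝒱 is weakly decreasing in its first argument, then for any finite school set H, capacities C ∈ ℕ^H, and positive finite measure η on Θ, the set of (η, 𝒱)-stable outcomes is non-empty and forms a complete lattice with respect to the partial order ⪰. -/
import Mathlib


open MeasureTheory Filter
open scoped Classical ENNReal

noncomputable section

/-- A student type: a complete (linear) order on `Option H` (`none` is the outside option `∅`),
together with a priority score in `[0,1]` at each school. -/
abbrev Student (H : Type*) := LinearOrder (Option H) × (H → unitInterval)

instance (H : Type*) : MeasurableSpace (LinearOrder (Option H)) := ⊤
instance (H : Type*) : TopologicalSpace (LinearOrder (Option H)) := ⊥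

/-- `Prefers θ a b` : student `θ` strictly prefers option `a` to option `b`. -/
def Prefers {H : Type*} (θ : Student H) (a b : Option H) : Prop := θ.1.lt b a

/-- Priority of `θ` at option `h` (junk value `1` at the outside option). -/
def priOf {H : Type*} (θ : Student H) : Option H → unitInterval := fun o => o.elim 1 θ.2

abbrev MatchingFun (H : Type*) := Student H → Option H → ℝ
abbrev InterestFun (H : Type*) := H → unitInterval → ℝ
abbrev AdmissionsFun (H : Type*) := Option H → unitInterval → ℝ

section Defs
variable {H : Type*} [Fintype H]

/-- `M` maps each student to a probability distribution over `Option H`. -/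
def IsMatchingFun (M : MatchingFun H) : Prop :=
  ∀ θ : Student H, (∀ h, 0 ≤ M θ h) ∧ ∑ h : Option H, M θ h = 1

/-- Interest functions are componentwise weakly decreasing and nonnegative. -/
def IsInterestFun (I : InterestFun H) : Prop :=
  ∀ h, Antitone (I h) ∧ ∀ p, 0 ≤ I h p

/-- Admissions functions are componentwise weakly increasing with values in `[0,1]`,
and everyone is always admitted to the outside option. -/
def IsAdmissionsFun (A : AdmissionsFun H) : Prop :=
  (∀ h, Monotone (A h) ∧ ∀ p, A h p ∈ Set.Icc (0:ℝ) 1) ∧ ∀ p, A none p = 1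

/-- The interest function `𝓘(M)` of a matching `M`. -/
def interestOf (η : Measure (Student H)) (M : MatchingFun H) : InterestFun H :=
  fun h p => ∫ θ, (if p ≤ θ.2 h then (1:ℝ) else 0) *
    (1 - ∑ h' ∈ Finset.univ.filter (fun h' : Option H => Prefers θ h' (some h)), M θ h') ∂η

/-- The admissions function `𝓐(I)` of an interest function `I`, given a vacancy function `V`
and capacities `C`. -/
def admissionsOf (V : ℝ → ℕ → ℝ) (C : H → ℕ) (I : InterestFun H) : AdmissionsFun H :=
  fun h p => h.elim 1 fun h0 => V (I h0 p) (C h0)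

/-- The matching `𝓜(A)` of an admissions function `A`. -/
def matchingOf (A : AdmissionsFun H) : MatchingFun H := fun θ h =>
  A h (priOf θ h) *
    ∏ h' ∈ Finset.univ.filter (fun h' : Option H => Prefers θ h' h), (1 - A h' (priOf θ h'))

/-- A matching `M` is `(η, V)`-stable if `M = 𝓜(𝓐(𝓘(M)))`. -/
def StableMatching (η : Measure (Student H)) (V : ℝ → ℕ → ℝ) (C : H → ℕ)
    (M : MatchingFun H) : Prop :=
  IsMatchingFun M ∧ M = matchingOf (admissionsOf V C (interestOf η M))

/-- An interest function `I` is `(η, V)`-stable if `I = 𝓘(𝓜(𝓐(I)))`. -/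
def StableInterest (η : Measure (Student H)) (V : ℝ → ℕ → ℝ) (C : H → ℕ)
    (I : InterestFun H) : Prop :=
  IsInterestFun I ∧ I = interestOf η (matchingOf (admissionsOf V C I))

/-- An admissions function `A` is `(η, V)`-stable if `A = 𝓐(𝓘(𝓜(A)))`. -/
def StableAdmissions (η : Measure (Student H)) (V : ℝ → ℕ → ℝ) (C : H → ℕ)
    (A : AdmissionsFun H) : Prop :=
  IsAdmissionsFun A ∧ A = admissionsOf V C (interestOf η (matchingOf A))

/-- An outcome `(M, I, A)` is `(η, V)`-stable. -/
def StableOutcome (η : Measure (Student H)) (V : ℝ → ℕ → ℝ) (C : H → ℕ)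
    (M : MatchingFun H) (I : InterestFun H) (A : AdmissionsFun H) : Prop :=
  IsMatchingFun M ∧ IsInterestFun I ∧ IsAdmissionsFun A ∧
  M = matchingOf A ∧ I = interestOf η M ∧ A = admissionsOf V C I

/-- The deterministic vacancy function `V^det(λ, C) = 1(λ < C)`. -/
def Vdet : ℝ → ℕ → ℝ := fun lam C => if lam < (C : ℝ) then 1 else 0

/-- The Poisson vacancy function `V^pois(λ, C) = Σ_{k<C} e^{-λ} λ^k / k!`. -/
def Vpois : ℝ → ℕ → ℝ := fun lam C =>
  ∑ k ∈ Finset.range C, Real.exp (-lam) * lam ^ k / (Nat.factorial k : ℝ)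

/-- A measure `η` on student types has strict priorities. -/
def StrictPriorities (η : Measure (Student H)) : Prop :=
  ∀ (h : H) (p : unitInterval), η {θ : Student H | Prefers θ (some h) none ∧ θ.2 h = p} = 0

end Defs

section Orders
variable {H : Type*} [Fintype H]

/-- `M ⪯ M'` : every student prefers `M'` to `M` in the sense of first-order stochastic
dominance. -/
def MatchLE (M M' : MatchingFun H) : Prop :=
  ∀ (θ : Student H) (h : Option H),
    ∑ h' ∈ Finset.univ.filter (fun h' : Option H => Prefers θ h' h ∨ h' = h), M θ h' ≤
    ∑ h' ∈ Finset.univ.filter (fun h' : Option H => Prefers θ h' h ∨ h' = h), M' θ h'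

/-- The partial order `⪯` on outcomes `(M, I, A)`: the matching increases (in the FOSD sense),
admission probabilities increase, and interest decreases. -/
def OutcomeLE (x y : MatchingFun H × InterestFun H × AdmissionsFun H) : Prop :=
  MatchLE x.1 y.1 ∧ (∀ h p, y.2.1 h p ≤ x.2.1 h p) ∧ (∀ h p, x.2.2 h p ≤ y.2.2 h p)

end Orders

section Aux

set_option linter.unusedSectionVars false

instance : Fact ((0:ℝ) ≤ 1) := ⟨zero_le_one⟩

variable {H : Type*} [Fintype H]

/-- The complete lattice in which we encode admissions functions. -/
abbrev KK (H : Type*) := H → (unitInterval →o unitInterval)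

/-- Decode a lattice element into an admissions function. -/
def decodeA (k : KK H) : AdmissionsFun H := fun h p => h.elim 1 fun h0 => ((k h0 p : ℝ))

/-- The structural properties of admissions functions we need. -/
def NiceA (A : AdmissionsFun H) : Prop :=
  (∀ h, Monotone (A h)) ∧ (∀ h p, A h p ∈ Set.Icc (0:ℝ) 1) ∧ (∀ p, A none p = 1)

lemma nice_decode (k : KK H) : NiceA (decodeA k) := by
  refine ⟨?_, ?_, fun p => rfl⟩
  · intro h
    cases h with
    | none => exact monotone_const
    | some h0 => exact fun p q hpq => Subtype.coe_le_coe.mpr ((k h0).monotone hpq)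
  · intro h p
    cases h with
    | none => exact ⟨zero_le_one, le_refl 1⟩
    | some h0 => exact (k h0 p).2

lemma nice_of_isAdm {A : AdmissionsFun H} (hA : IsAdmissionsFun A) : NiceA A :=
  ⟨fun h => (hA.1 h).1, fun h p => (hA.1 h).2 p, hA.2⟩

lemma isAdm_decode (k : KK H) : IsAdmissionsFun (decodeA k) :=
  ⟨fun h => ⟨(nice_decode k).1 h, fun p => (nice_decode k).2.1 h p⟩, (nice_decode k).2.2⟩

lemma prefers_trans (θ : Student H) {a b c : Option H} (h1 : Prefers θ a b) (h2 : Prefers θ b c) :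
    Prefers θ a c := by
  letI := θ.1
  exact lt_trans h2 h1

/-- The key telescoping identity. -/
lemma telescope (θ : Student H) (b : Option H → ℝ) :
    ∀ S : Finset (Option H), (∀ h' ∈ S, ∀ h'', Prefers θ h'' h' → h'' ∈ S) →
    ∑ h' ∈ S, b h' * ∏ h'' ∈ Finset.univ.filter (fun h'' : Option H => Prefers θ h'' h'), (1 - b h'') =
      1 - ∏ h' ∈ S, (1 - b h') := by
  intro S
  induction S using Finset.strongInduction with
  | _ S ih =>
    intro hS
    rcases S.eq_empty_or_nonempty with rfl | hne
    · simp
    · letI := θ.1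
      obtain ⟨m, hm, hmin⟩ := S.exists_min_image id hne
      have hkey : Finset.univ.filter (fun h'' : Option H => Prefers θ h'' m) = S.erase m := by
        ext x
        simp only [Finset.mem_filter, Finset.mem_univ, true_and, Finset.mem_erase]
        constructor
        · intro hx
          refine ⟨fun hxm => ?_, hS m hm x hx⟩
          subst hxm
          exact lt_irrefl x hx
        · rintro ⟨hxm, hxS⟩
          exact lt_of_le_of_ne (hmin x hxS) (Ne.symm hxm)
      have hsub : S.erase m ⊂ S := Finset.erase_ssubset hm
      have hup : ∀ h' ∈ S.erase m, ∀ h'', Prefers θ h'' h' → h'' ∈ S.erase m := by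
        intro h' hh' h'' hp
        have hh'S := (Finset.mem_erase.mp hh').2
        refine Finset.mem_erase.mpr ⟨?_, hS h' hh'S h'' hp⟩
        intro hrfl
        subst hrfl
        exact lt_irrefl _ (lt_of_le_of_lt (hmin h' hh'S) hp)
      rw [← Finset.insert_erase hm, Finset.sum_insert (Finset.notMem_erase m S),
        Finset.prod_insert (Finset.notMem_erase m S), hkey, ih (S.erase m) hsub hup]
      ring

lemma sum_matching_eq (A : AdmissionsFun H) (θ : Student H) (S : Finset (Option H))
    (hS : ∀ h' ∈ S, ∀ h'', Prefers θ h'' h' → h'' ∈ S) :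
    ∑ h' ∈ S, matchingOf A θ h' = 1 - ∏ h' ∈ S, (1 - A h' (priOf θ h')) := by
  simpa only [matchingOf] using telescope θ (fun h' => A h' (priOf θ h')) S hS

lemma upAbove (θ : Student H) (h : H) :
    ∀ h' ∈ Finset.univ.filter (fun h' : Option H => Prefers θ h' (some h)), ∀ h'',
      Prefers θ h'' h' →
      h'' ∈ Finset.univ.filter (fun h' : Option H => Prefers θ h' (some h)) := by
  intro h' hh' h'' hp
  simp only [Finset.mem_filter, Finset.mem_univ, true_and] at *
  exact prefers_trans θ hp hh'

lemma upWeak (θ : Student H) (h : Option H) :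
    ∀ h' ∈ Finset.univ.filter (fun h' : Option H => Prefers θ h' h ∨ h' = h), ∀ h'',
      Prefers θ h'' h' →
      h'' ∈ Finset.univ.filter (fun h' : Option H => Prefers θ h' h ∨ h' = h) := by
  intro h' hh' h'' hp
  simp only [Finset.mem_filter, Finset.mem_univ, true_and] at *
  rcases hh' with hp' | rfl
  · exact Or.inl (prefers_trans θ hp hp')
  · exact Or.inl hp

lemma isMatching_matchingOf {A : AdmissionsFun H} (hA : NiceA A) :
    IsMatchingFun (matchingOf A) := by
  intro θ
  constructor
  · intro h
    exact mul_nonneg (hA.2.1 h _).1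
      (Finset.prod_nonneg fun i _ => sub_nonneg.mpr (hA.2.1 i _).2)
  · rw [sum_matching_eq A θ Finset.univ (fun h' _ h'' _ => Finset.mem_univ _),
      Finset.prod_eq_zero (Finset.mem_univ none)]
    · ring
    · rw [hA.2.2]
      ring

/-- The integrand of the interest function, in product form. -/
def gfun (A : AdmissionsFun H) (h : H) (p : unitInterval) : Student H → ℝ := fun θ =>
  (if p ≤ θ.2 h then (1:ℝ) else 0) *
    ∏ h' ∈ Finset.univ.filter (fun h' : Option H => Prefers θ h' (some h)),
      (1 - A h' (priOf θ h'))

lemma interest_eq (η : Measure (Student H)) (A : AdmissionsFun H) (h : H) (p : unitInterval) :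
    interestOf η (matchingOf A) h p = ∫ θ, gfun A h p θ ∂η := by
  unfold interestOf gfun
  congr 1
  funext θ
  rw [sum_matching_eq A θ _ (upAbove θ h)]
  ring

lemma meas_pri {A : AdmissionsFun H} (hA : NiceA A) (h' : Option H) :
    Measurable fun θ : Student H => A h' (priOf θ h') := by
  cases h' with
  | none =>
    show Measurable fun _ : Student H => A none 1
    exact measurable_const
  | some h0 =>
    show Measurable fun θ : Student H => A (some h0) (θ.2 h0)
    exact ((hA.1 (some h0)).measurable).comp ((measurable_pi_apply h0).comp measurable_snd)

lemma meas_prefers (a b : Option H) : MeasurableSet {θ : Student H | Prefers θ a b} := by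
  have : {θ : Student H | Prefers θ a b} =
      Prod.fst ⁻¹' {L : LinearOrder (Option H) | L.lt b a} := rfl
  rw [this]
  exact measurable_fst MeasurableSpace.measurableSet_top

lemma meas_gfun {A : AdmissionsFun H} (hA : NiceA A) (h : H) (p : unitInterval) :
    Measurable (gfun A h p) := by
  unfold gfun
  apply Measurable.mul
  · refine Measurable.ite ?_ measurable_const measurable_const
    have : {θ : Student H | p ≤ θ.2 h} = (fun θ : Student H => θ.2 h) ⁻¹' Set.Ici p := rfl
    rw [this]
    exact ((measurable_pi_apply h).comp measurable_snd) measurableSet_Ici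
  · have : (fun θ : Student H => ∏ h' ∈ Finset.univ.filter
        (fun h' : Option H => Prefers θ h' (some h)), (1 - A h' (priOf θ h'))) =
        fun θ : Student H => ∏ h' : Option H,
          if Prefers θ h' (some h) then (1 - A h' (priOf θ h')) else 1 := by
      funext θ
      rw [Finset.prod_filter]
    rw [this]
    exact Finset.measurable_prod _ (fun h' _ => Measurable.ite (meas_prefers h' (some h))
      (measurable_const.sub (meas_pri hA h')) measurable_const)

lemma gfun_nonneg {A : AdmissionsFun H} (hA : NiceA A) (h : H) (p : unitInterval)
    (θ : Student H) : 0 ≤ gfun A h p θ :=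
  mul_nonneg (by split <;> norm_num)
    (Finset.prod_nonneg fun i _ => sub_nonneg.mpr (hA.2.1 i _).2)

lemma gfun_le_one {A : AdmissionsFun H} (hA : NiceA A) (h : H) (p : unitInterval)
    (θ : Student H) : gfun A h p θ ≤ 1 := by
  refine mul_le_one₀ (by split <;> norm_num)
    (Finset.prod_nonneg fun i _ => sub_nonneg.mpr (hA.2.1 i _).2)
    (Finset.prod_le_one (fun i _ => sub_nonneg.mpr (hA.2.1 i _).2)
      (fun i _ => by linarith [(hA.2.1 i (priOf θ i)).1]))

lemma gfun_anti_p {A : AdmissionsFun H} (hA : NiceA A) (h : H) {p q : unitInterval}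
    (hpq : p ≤ q) (θ : Student H) : gfun A h q θ ≤ gfun A h p θ := by
  unfold gfun
  apply mul_le_mul_of_nonneg_right ?_
    (Finset.prod_nonneg fun i _ => sub_nonneg.mpr (hA.2.1 i _).2)
  by_cases hq : q ≤ θ.2 h
  · rw [if_pos hq, if_pos (hpq.trans hq)]
  · rw [if_neg hq]
    split <;> norm_num

lemma gfun_anti_A {A A' : AdmissionsFun H} (hA : NiceA A) (hA' : NiceA A')
    (hle : ∀ h p, A h p ≤ A' h p) (h : H) (p : unitInterval) (θ : Student H) :
    gfun A' h p θ ≤ gfun A h p θ := by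
  unfold gfun
  apply mul_le_mul_of_nonneg_left ?_ (by split <;> norm_num)
  exact Finset.prod_le_prod (fun i _ => sub_nonneg.mpr (hA'.2.1 i _).2)
    (fun i _ => sub_le_sub_left (hle i _) 1)

lemma integrable_gfun (η : Measure (Student H)) [IsFiniteMeasure η] {A : AdmissionsFun H}
    (hA : NiceA A) (h : H) (p : unitInterval) : Integrable (gfun A h p) η := by
  refine ⟨(meas_gfun hA h p).aestronglyMeasurable,
    HasFiniteIntegral.of_bounded (C := 1) (Eventually.of_forall fun θ => ?_)⟩
  rw [Real.norm_eq_abs, abs_le]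
  exact ⟨by linarith [gfun_nonneg hA h p θ], gfun_le_one hA h p θ⟩

lemma interest_nonneg (η : Measure (Student H)) [IsFiniteMeasure η] {A : AdmissionsFun H}
    (hA : NiceA A) (h : H) (p : unitInterval) : 0 ≤ interestOf η (matchingOf A) h p := by
  rw [interest_eq]
  exact integral_nonneg fun θ => gfun_nonneg hA h p θ

lemma interest_anti (η : Measure (Student H)) [IsFiniteMeasure η] {A : AdmissionsFun H}
    (hA : NiceA A) (h : H) : Antitone (interestOf η (matchingOf A) h) := by
  intro p q hpq
  rw [interest_eq, interest_eq]
  exact integral_mono (integrable_gfun η hA h q) (integrable_gfun η hA h p)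
    (fun θ => gfun_anti_p hA h hpq θ)

lemma interest_anti_A (η : Measure (Student H)) [IsFiniteMeasure η] {A A' : AdmissionsFun H}
    (hA : NiceA A) (hA' : NiceA A') (hle : ∀ h p, A h p ≤ A' h p) (h : H) (p : unitInterval) :
    interestOf η (matchingOf A') h p ≤ interestOf η (matchingOf A) h p := by
  rw [interest_eq, interest_eq]
  exact integral_mono (integrable_gfun η hA' h p) (integrable_gfun η hA h p)
    (fun θ => gfun_anti_A hA hA' hle h p θ)

lemma matchLE_of_le {A A' : AdmissionsFun H} (hA : NiceA A) (hA' : NiceA A')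
    (hle : ∀ h p, A h p ≤ A' h p) : MatchLE (matchingOf A) (matchingOf A') := by
  intro θ h
  rw [sum_matching_eq A θ _ (upWeak θ h), sum_matching_eq A' θ _ (upWeak θ h)]
  have : ∏ h' ∈ Finset.univ.filter (fun h' : Option H => Prefers θ h' h ∨ h' = h),
      (1 - A' h' (priOf θ h')) ≤
      ∏ h' ∈ Finset.univ.filter (fun h' : Option H => Prefers θ h' h ∨ h' = h),
      (1 - A h' (priOf θ h')) :=
    Finset.prod_le_prod (fun i _ => sub_nonneg.mpr (hA'.2.1 i _).2)
      (fun i _ => sub_le_sub_left (hle i _) 1)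
  linarith

lemma decode_mono {k k' : KK H} (hkk' : k ≤ k') : ∀ h p, decodeA k h p ≤ decodeA k' h p := by
  intro h p
  cases h with
  | none => exact le_refl 1
  | some h0 => exact Subtype.coe_le_coe.mpr (hkk' h0 p)

variable (η : Measure (Student H)) [IsFiniteMeasure η] (V : ℝ → ℕ → ℝ) (C : H → ℕ)

/-- The stability operator on the lattice `KK H`. -/
def Tmap (hVrange : ∀ (x : ℝ) (c : ℕ), 0 ≤ x → V x c ∈ Set.Icc (0:ℝ) 1)
    (hVmono : ∀ (c : ℕ) (x y : ℝ), 0 ≤ x → x ≤ y → V y c ≤ V x c) : KK H →o KK H where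
  toFun k h :=
    { toFun := fun p => ⟨V (interestOf η (matchingOf (decodeA k)) h p) (C h),
        hVrange _ _ (interest_nonneg η (nice_decode k) h p)⟩
      monotone' := fun p q hpq => Subtype.mk_le_mk.mpr
        (hVmono (C h) _ _ (interest_nonneg η (nice_decode k) h q)
          (interest_anti η (nice_decode k) h hpq)) }
  monotone' := by
    intro k k' hkk' h p
    exact Subtype.mk_le_mk.mpr
      (hVmono (C h) _ _ (interest_nonneg η (nice_decode k') h p)
        (interest_anti_A η (nice_decode k) (nice_decode k') (decode_mono hkk') h p))

variable (hVrange : ∀ (x : ℝ) (c : ℕ), 0 ≤ x → V x c ∈ Set.Icc (0:ℝ) 1)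
variable (hVmono : ∀ (c : ℕ) (x y : ℝ), 0 ≤ x → x ≤ y → V y c ≤ V x c)

lemma stable_of_fixed {k : KK H} (hk : Function.IsFixedPt ⇑(Tmap η V C hVrange hVmono) k) :
    StableOutcome η V C (matchingOf (decodeA k)) (interestOf η (matchingOf (decodeA k)))
      (decodeA k) := by
  refine ⟨isMatching_matchingOf (nice_decode k), ?_, isAdm_decode k, rfl, rfl, ?_⟩
  · intro h
    exact ⟨interest_anti η (nice_decode k) h, fun p => interest_nonneg η (nice_decode k) h p⟩
  · funext h p
    cases h with
    | none => rfl
    | some h0 =>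
      have h2 := DFunLike.congr_fun (congrFun hk h0) p
      exact (congrArg Subtype.val h2).symm

/-- Encode an admissions function into the lattice. -/
def encodeA (A : AdmissionsFun H) (hA : IsAdmissionsFun A) : KK H := fun h0 =>
  { toFun := fun p => ⟨A (some h0) p, (hA.1 (some h0)).2 p⟩
    monotone' := fun p q hpq => Subtype.mk_le_mk.mpr ((hA.1 (some h0)).1 hpq) }

lemma decode_encode {A : AdmissionsFun H} (hA : IsAdmissionsFun A) :
    decodeA (encodeA A hA) = A := by
  funext h p
  cases h with
  | none => exact (hA.2 p).symm
  | some h0 => rfl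

lemma fixed_of_stable {M : MatchingFun H} {I : InterestFun H} {A : AdmissionsFun H}
    (hst : StableOutcome η V C M I A) :
    Function.IsFixedPt ⇑(Tmap η V C hVrange hVmono) (encodeA A hst.2.2.1) := by
  obtain ⟨hM, hI, hA, hM_eq, hI_eq, hA_eq⟩ := hst
  funext h0
  refine OrderHom.ext _ _ (funext fun p => Subtype.ext ?_)
  show V (interestOf η (matchingOf (decodeA (encodeA A hA))) h0 p) (C h0) = A (some h0) p
  rw [decode_encode hA, ← hM_eq, ← hI_eq, hA_eq]
  rfl

lemma encode_le_encode {A A' : AdmissionsFun H} (hA : IsAdmissionsFun A)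
    (hA' : IsAdmissionsFun A') (hle : ∀ h p, A h p ≤ A' h p) :
    encodeA A hA ≤ encodeA A' hA' := by
  intro h0 p
  exact Subtype.mk_le_mk.mpr (hle (some h0) p)

lemma le_decode {A : AdmissionsFun H} (hA : IsAdmissionsFun A) {k : KK H}
    (h : encodeA A hA ≤ k) : ∀ h0 p, A h0 p ≤ decodeA k h0 p := by
  intro h0 p
  cases h0 with
  | none =>
    have h1 : decodeA k none p = 1 := rfl
    rw [h1, hA.2 p]
  | some h0 => exact Subtype.coe_le_coe.mpr (h h0 p)

lemma decode_le {A : AdmissionsFun H} (hA : IsAdmissionsFun A) {k : KK H}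
    (h : k ≤ encodeA A hA) : ∀ h0 p, decodeA k h0 p ≤ A h0 p := by
  intro h0 p
  cases h0 with
  | none =>
    have h1 : decodeA k none p = 1 := rfl
    rw [h1, hA.2 p]
  | some h0 => exact Subtype.coe_le_coe.mpr (h h0 p)

lemma outcomeLE_of_le (x y : MatchingFun H × InterestFun H × AdmissionsFun H)
    (hx : StableOutcome η V C x.1 x.2.1 x.2.2) (hy : StableOutcome η V C y.1 y.2.1 y.2.2)
    (hle : ∀ h p, x.2.2 h p ≤ y.2.2 h p) : OutcomeLE x y := by
  obtain ⟨_, _, hAx, hMx, hIx, _⟩ := hx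
  obtain ⟨_, _, hAy, hMy, hIy, _⟩ := hy
  have nx := nice_of_isAdm hAx
  have ny := nice_of_isAdm hAy
  refine ⟨?_, ?_, hle⟩
  · rw [hMx, hMy]
    exact matchLE_of_le nx ny hle
  · intro h p
    rw [hIx, hIy, hMx, hMy]
    exact interest_anti_A η nx ny hle h p

end Aux

set_option maxSynthPendingDepth 2

/-- If the vacancy function `V : ℝ₊ × ℕ → [0,1]` is weakly decreasing in its
first argument, then for any finite `H`, capacities `C` and positive finite measure `η`, the set
of `(η, V)`-stable outcomes is non-empty and forms a complete lattice with respect to `⪯`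
(every subset of the stable set has a least upper bound and a greatest lower bound within the
stable set). -/
theorem stmt4 {H : Type*} [Fintype H] (V : ℝ → ℕ → ℝ)
    (hVrange : ∀ (x : ℝ) (c : ℕ), 0 ≤ x → V x c ∈ Set.Icc (0:ℝ) 1)
    (hVmono : ∀ (c : ℕ) (x y : ℝ), 0 ≤ x → x ≤ y → V y c ≤ V x c)
    (C : H → ℕ) (η : Measure (Student H)) [IsFiniteMeasure η] :
    (∃ M I A, StableOutcome η V C M I A) ∧
    (∀ T : Set (MatchingFun H × InterestFun H × AdmissionsFun H),
      (∀ x ∈ T, StableOutcome η V C x.1 x.2.1 x.2.2) →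
      ((∃ z, StableOutcome η V C z.1 z.2.1 z.2.2 ∧ (∀ x ∈ T, OutcomeLE x z) ∧
          ∀ w, StableOutcome η V C w.1 w.2.1 w.2.2 → (∀ x ∈ T, OutcomeLE x w) → OutcomeLE z w) ∧
       (∃ z, StableOutcome η V C z.1 z.2.1 z.2.2 ∧ (∀ x ∈ T, OutcomeLE z x) ∧
          ∀ w, StableOutcome η V C w.1 w.2.1 w.2.2 → (∀ x ∈ T, OutcomeLE w x) → OutcomeLE w z))) := by
  set Tm : KK H →o KK H := Tmap η V C hVrange hVmono with hTm
  have main : ∀ k : Function.fixedPoints ⇑Tm,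
      StableOutcome η V C (matchingOf (decodeA (k : KK H)))
        (interestOf η (matchingOf (decodeA (k : KK H)))) (decodeA (k : KK H)) :=
    fun k => stable_of_fixed η V C hVrange hVmono k.2
  constructor
  · exact ⟨_, _, _, main ⟨OrderHom.lfp Tm, OrderHom.isFixedPt_lfp Tm⟩⟩
  · intro T hT
    set S : Set (Function.fixedPoints ⇑Tm) :=
      {k | ∃ x, ∃ hx : x ∈ T, (k : KK H) = encodeA x.2.2 (hT x hx).2.2.1} with hS
    constructor
    · -- supremum
      set z := sSup S with hz
      refine ⟨(matchingOf (decodeA (z : KK H)), interestOf η (matchingOf (decodeA (z : KK H))),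
        decodeA (z : KK H)), main z, ?_, ?_⟩
      · intro x hx
        have hmem : (⟨encodeA x.2.2 (hT x hx).2.2.1,
            fixed_of_stable η V C hVrange hVmono (hT x hx)⟩ : Function.fixedPoints ⇑Tm) ∈ S :=
          ⟨x, hx, rfl⟩
        have hle := Subtype.coe_le_coe.mpr (le_sSup hmem)
        exact outcomeLE_of_le η V C x _ (hT x hx) (main z)
          (le_decode (hT x hx).2.2.1 hle)
      · intro w hw hub
        have hwfix := fixed_of_stable η V C hVrange hVmono hw
        have hzw : z ≤ ⟨encodeA w.2.2 hw.2.2.1, hwfix⟩ := by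
          rw [hz]
          refine @sSup_le (Function.fixedPoints ⇑Tm) _ S _ ?_
          rintro k ⟨x, hx, hk⟩
          apply Subtype.coe_le_coe.mp
          rw [hk]
          exact encode_le_encode (hT x hx).2.2.1 hw.2.2.1 (fun h p => (hub x hx).2.2 h p)
        exact outcomeLE_of_le η V C _ w (main z) hw
          (decode_le hw.2.2.1 (Subtype.coe_le_coe.mpr hzw))
    · -- infimum
      set z := sInf S with hz
      refine ⟨(matchingOf (decodeA (z : KK H)), interestOf η (matchingOf (decodeA (z : KK H))),
        decodeA (z : KK H)), main z, ?_, ?_⟩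
      · intro x hx
        have hmem : (⟨encodeA x.2.2 (hT x hx).2.2.1,
            fixed_of_stable η V C hVrange hVmono (hT x hx)⟩ : Function.fixedPoints ⇑Tm) ∈ S :=
          ⟨x, hx, rfl⟩
        have hle := Subtype.coe_le_coe.mpr (sInf_le hmem)
        exact outcomeLE_of_le η V C _ x (main z) (hT x hx)
          (decode_le (hT x hx).2.2.1 hle)
      · intro w hw hub
        have hwfix := fixed_of_stable η V C hVrange hVmono hw
        have hwz : (⟨encodeA w.2.2 hw.2.2.1, hwfix⟩ : Function.fixedPoints ⇑Tm) ≤ z := by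
          rw [hz]
          refine @le_sInf (Function.fixedPoints ⇑Tm) _ S _ ?_
          rintro k ⟨x, hx, hk⟩
          apply Subtype.coe_le_coe.mp
          rw [hk]
          exact encode_le_encode hw.2.2.1 (hT x hx).2.2.1 (fun h p => (hub x hx).2.2 h p)
        exact outcomeLE_of_le η V C w _ hw (main z)
          (le_decode hw.2.2.1 (Subtype.coe_le_coe.mpr hwz))
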